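/- Let d be a positive integer, let (M, dist) be a metric space equipped with a Borel measure m such that m(M) < ∞ and m(B(x,r)) ≤ C_v·r^d for all x ∈ M and r > 0, let c > 0 and 0 < α < d/2. Then there exists a constant C > 0 such that for all t > 0 and all x, x' ∈ M, ∬_{M×M} t^(−d/2)·exp(−dist(x,y)²/(c·t))·dist(y,y')^(2α−d)·t^(−d/2)·exp(−dist(x',y')²/(c·t)) dm(y) dm(y') ≤ C·(t^((2α−d)/2) + 1). -/
import Mathlib

open MeasureTheory
open scoped ENNReal NNReal

/-- Layer-cake helper: if `f` is pointwise dominated by a countable sum of constants times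
indicators of measurable sets, its lintegral is dominated by the corresponding series. -/
private lemma layercake_aux {M : Type*} [MeasurableSpace M]
    (m : Measure M) (f : M → ℝ≥0∞) (a : ℕ → ℝ≥0∞) (s : ℕ → Set M)
    (hs : ∀ k, MeasurableSet (s k))
    (hf : ∀ y, f y ≤ ∑' k, (s k).indicator (fun _ => a k) y) :
    ∫⁻ y, f y ∂m ≤ ∑' k, a k * m (s k) := by
  calc ∫⁻ y, f y ∂m ≤ ∫⁻ y, ∑' k, (s k).indicator (fun _ => a k) y ∂m := lintegral_mono hf
    _ = ∑' k, ∫⁻ y, (s k).indicator (fun _ => a k) y ∂m :=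
        lintegral_tsum fun k => (measurable_const.indicator (hs k)).aemeasurable
    _ = ∑' k, a k * m (s k) := tsum_congr fun k => lintegral_indicator_const (hs k) _
private lemma gauss_summable (d : ℕ) :
    Summable (fun k : ℕ => Real.exp (-(k : ℝ)) * ((k : ℝ) + 1) ^ ((d : ℝ) / 2)) := by
  have hmaj : Summable (fun k : ℕ =>
      (2 : ℝ) ^ d * ((k : ℝ) ^ d * Real.exp (-1 * k) + Real.exp (-(k : ℝ)))) :=
    (((Real.summable_pow_mul_exp_neg_nat_mul d one_pos).add Real.summable_exp_neg_nat).mul_left _)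
  refine Summable.of_nonneg_of_le (fun k => by positivity) (fun k => ?_) hmaj
  have h1 : ((k : ℝ) + 1) ^ ((d : ℝ) / 2) ≤ ((k : ℝ) + 1) ^ (d : ℕ) := by
    have := Real.rpow_le_rpow_of_exponent_le (x := (k : ℝ) + 1)
      (by have : (0:ℝ) ≤ (k:ℝ) := Nat.cast_nonneg k; linarith)
      (by have : (0:ℝ) ≤ (d:ℝ) := Nat.cast_nonneg d; linarith [half_le_self this] :
        ((d : ℝ) / 2) ≤ (d : ℝ))
    rwa [Real.rpow_natCast] at this
  have h2 : ((k : ℝ) + 1) ^ (d : ℕ) ≤ 2 ^ d * ((k : ℝ) ^ d + 1) := by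
    rcases Nat.eq_zero_or_pos k with hk | hk
    · subst hk
      simp only [Nat.cast_zero, zero_add, one_pow]
      have h3 : (1:ℝ) ≤ 2 ^ d := one_le_pow₀ (by norm_num)
      nlinarith [pow_nonneg (le_refl (0:ℝ)) d, pow_nonneg (by norm_num : (0:ℝ) ≤ 2) d,
        mul_nonneg (pow_nonneg (by norm_num : (0:ℝ) ≤ 2) d) (pow_nonneg (le_refl (0:ℝ)) d)]
    · have hk1 : (1:ℝ) ≤ (k:ℝ) := by exact_mod_cast hk
      have : ((k : ℝ) + 1) ^ d ≤ (2 * k) ^ d :=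
        pow_le_pow_left₀ (by linarith) (by linarith) d
      rw [mul_pow] at this
      nlinarith [pow_nonneg (by norm_num : (0:ℝ) ≤ 2) d, pow_nonneg (by linarith : (0:ℝ) ≤ (k:ℝ)) d]
  calc Real.exp (-(k : ℝ)) * ((k : ℝ) + 1) ^ ((d : ℝ) / 2)
      ≤ Real.exp (-(k : ℝ)) * (2 ^ d * ((k : ℝ) ^ d + 1)) :=
        mul_le_mul_of_nonneg_left (h1.trans h2) (Real.exp_nonneg _)
    _ = (2 : ℝ) ^ d * ((k : ℝ) ^ d * Real.exp (-1 * k) + Real.exp (-(k : ℝ))) := by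
        rw [neg_one_mul]; ring

private lemma gauss_bound {M : Type*} [MetricSpace M] [MeasurableSpace M] [BorelSpace M]
    (m : Measure M) (d : ℕ) (C_v : ℝ) (hCv : 0 < C_v)
    (hvol : ∀ (x : M) (r : ℝ), 0 < r → m (Metric.ball x r) ≤ ENNReal.ofReal (C_v * r ^ d))
    (c : ℝ) (hc : 0 < c) :
    ∃ A > 0, ∀ t : ℝ, 0 < t → ∀ x : M,
      ∫⁻ y, ENNReal.ofReal (Real.exp (-(dist x y ^ 2) / (c * t))) ∂m
        ≤ ENNReal.ofReal (A * t ^ ((d : ℝ) / 2)) := by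
  classical
  set u : ℕ → ℝ := fun k => Real.exp (-(k : ℝ)) * ((k : ℝ) + 1) ^ ((d : ℝ) / 2) with hu
  have hu_nonneg : ∀ k, 0 ≤ u k := fun k => by positivity
  have hS : Summable u := gauss_summable d
  set S := ∑' k, u k with hSdef
  have hS1 : (1 : ℝ) ≤ S := by
    have h0 : u 0 = 1 := by simp [hu]
    calc (1 : ℝ) = u 0 := h0.symm
      _ ≤ S := Summable.le_tsum hS 0 fun i _ => hu_nonneg i
  have hSpos : 0 < S := lt_of_lt_of_le one_pos hS1
  refine ⟨C_v * c ^ ((d : ℝ) / 2) * S,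
    mul_pos (mul_pos hCv (Real.rpow_pos_of_pos hc _)) hSpos, ?_⟩
  intro t ht x
  have hct : 0 < c * t := mul_pos hc ht
  set s : ℕ → Set M := fun k => Metric.ball x (Real.sqrt (((k : ℝ) + 1) * (c * t))) with hs
  have key : ∫⁻ y, ENNReal.ofReal (Real.exp (-(dist x y ^ 2) / (c * t))) ∂m
      ≤ ∑' (k : ℕ), ENNReal.ofReal (Real.exp (-(k : ℝ))) * m (s k) := by
    refine layercake_aux m _ _ s (fun k => Metric.isOpen_ball.measurableSet) ?_
    intro y
    set u0 : ℝ := dist x y ^ 2 / (c * t) with hu0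
    have hu0n : 0 ≤ u0 := div_nonneg (sq_nonneg _) hct.le
    set k := ⌊u0⌋₊ with hk
    have h1 : Real.exp (-(dist x y ^ 2) / (c * t)) ≤ Real.exp (-(k : ℝ)) := by
      rw [neg_div]
      exact Real.exp_le_exp.mpr (neg_le_neg (Nat.floor_le hu0n))
    have hmem : y ∈ s k := by
      rw [hs]
      simp only [Metric.mem_ball]
      rw [dist_comm]
      have h2 : dist x y ^ 2 < ((k : ℝ) + 1) * (c * t) := by
        have h3 := Nat.lt_floor_add_one u0
        calc dist x y ^ 2 = u0 * (c * t) := by rw [hu0]; field_simp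
          _ < ((k : ℝ) + 1) * (c * t) := mul_lt_mul_of_pos_right h3 hct
      calc dist x y = Real.sqrt (dist x y ^ 2) := (Real.sqrt_sq dist_nonneg).symm
        _ < _ := Real.sqrt_lt_sqrt (sq_nonneg _) h2
    calc ENNReal.ofReal (Real.exp (-(dist x y ^ 2) / (c * t)))
        ≤ (s k).indicator (fun _ => ENNReal.ofReal (Real.exp (-(k : ℝ)))) y := by
          rw [Set.indicator_of_mem hmem]
          exact ENNReal.ofReal_le_ofReal h1
      _ ≤ ∑' k, (s k).indicator (fun _ => ENNReal.ofReal (Real.exp (-(k : ℝ)))) y :=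
          ENNReal.le_tsum k
  refine key.trans ?_
  have hterm : ∀ k : ℕ, ENNReal.ofReal (Real.exp (-(k : ℝ))) * m (s k)
      ≤ ENNReal.ofReal ((C_v * c ^ ((d : ℝ) / 2) * t ^ ((d : ℝ) / 2)) * u k) := by
    intro k
    have hrad : 0 < Real.sqrt (((k : ℝ) + 1) * (c * t)) := Real.sqrt_pos.mpr (by positivity)
    have hr : (Real.sqrt (((k : ℝ) + 1) * (c * t))) ^ d
        = ((k : ℝ) + 1) ^ ((d : ℝ) / 2) * (c ^ ((d : ℝ) / 2) * t ^ ((d : ℝ) / 2)) := by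
      rw [Real.sqrt_eq_rpow, ← Real.rpow_natCast ((((k:ℝ)+1) * (c*t)) ^ (1/2 : ℝ)) d,
        ← Real.rpow_mul (by positivity)]
      rw [show (1 / 2 : ℝ) * (d : ℕ) = (d : ℝ) / 2 by push_cast; ring]
      rw [Real.mul_rpow (by positivity) (by positivity), Real.mul_rpow hc.le ht.le]
    calc ENNReal.ofReal (Real.exp (-(k : ℝ))) * m (s k)
        ≤ ENNReal.ofReal (Real.exp (-(k : ℝ)))
            * ENNReal.ofReal (C_v * Real.sqrt (((k : ℝ) + 1) * (c * t)) ^ d) :=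
          mul_le_mul_right (hvol x _ hrad) _
      _ = ENNReal.ofReal (Real.exp (-(k : ℝ))
            * (C_v * Real.sqrt (((k : ℝ) + 1) * (c * t)) ^ d)) :=
          (ENNReal.ofReal_mul (Real.exp_nonneg _)).symm
      _ = ENNReal.ofReal ((C_v * c ^ ((d : ℝ) / 2) * t ^ ((d : ℝ) / 2)) * u k) := by
          rw [hr, hu]; ring_nf
  calc ∑' (k : ℕ), ENNReal.ofReal (Real.exp (-(k : ℝ))) * m (s k)
      ≤ ∑' (k : ℕ), ENNReal.ofReal ((C_v * c ^ ((d : ℝ) / 2) * t ^ ((d : ℝ) / 2)) * u k) :=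
        ENNReal.tsum_le_tsum hterm
    _ = ENNReal.ofReal (∑' (k : ℕ), (C_v * c ^ ((d : ℝ) / 2) * t ^ ((d : ℝ) / 2)) * u k) :=
        (ENNReal.ofReal_tsum_of_nonneg (fun k => by positivity) (hS.mul_left _)).symm
    _ = ENNReal.ofReal (C_v * c ^ ((d : ℝ) / 2) * S * t ^ ((d : ℝ) / 2)) := by
        rw [tsum_mul_left, ← hSdef]; ring_nf
private lemma riesz_bound {M : Type*} [MetricSpace M] [MeasurableSpace M] [BorelSpace M]
    (m : Measure M) (d : ℕ) (C_v : ℝ) (hCv : 0 < C_v)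
    (hvol : ∀ (x : M) (r : ℝ), 0 < r → m (Metric.ball x r) ≤ ENNReal.ofReal (C_v * r ^ d))
    (α : ℝ) (hα : 0 < α) (hαd : α < (d : ℝ) / 2) :
    ∃ B > 0, ∀ t : ℝ, 0 < t → ∀ y : M,
      ∫⁻ y', ENNReal.ofReal
          (if dist y y' ≤ Real.sqrt t then dist y y' ^ (2 * α - (d : ℝ)) else 0) ∂m
        ≤ ENNReal.ofReal (B * t ^ α) := by
  classical
  set β : ℝ := 2 * α - (d : ℝ) with hβdef
  have hβ : β < 0 := by rw [hβdef]; linarith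
  set Q : ℝ := (1 / 2 : ℝ) ^ β * (1 / 2 : ℝ) ^ (d : ℕ) with hQdef
  have hQeq : Q = (1 / 2 : ℝ) ^ (2 * α) := by
    rw [hQdef, ← Real.rpow_natCast (1 / 2 : ℝ) d, ← Real.rpow_add (by norm_num)]
    congr 1
    rw [hβdef]; ring
  have hQ0 : 0 ≤ Q := by
    rw [hQeq]; positivity
  have hQ1 : Q < 1 := by
    rw [hQeq]
    exact Real.rpow_lt_one (by norm_num) (by norm_num) (by linarith)
  have hhalfβ : (0 : ℝ) < (1 / 2 : ℝ) ^ β := Real.rpow_pos_of_pos (by norm_num) _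
  refine ⟨C_v * 2 ^ d * (1 / 2 : ℝ) ^ β * (1 - Q)⁻¹,
    mul_pos (mul_pos (mul_pos hCv (by positivity)) hhalfβ)
      (inv_pos.mpr (by linarith)), ?_⟩
  intro t ht y
  have hst : 0 < Real.sqrt t := Real.sqrt_pos.mpr ht
  set ρ : ℕ → ℝ := fun j => (1 / 2 : ℝ) ^ j * Real.sqrt t with hρ
  have hρpos : ∀ j, 0 < ρ j := fun j => by rw [hρ]; positivity
  set s : ℕ → Set M := fun j => Metric.ball y (2 * ρ j) with hs
  have key : ∫⁻ y', ENNReal.ofReal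
      (if dist y y' ≤ Real.sqrt t then dist y y' ^ β else 0) ∂m
      ≤ ∑' (j : ℕ), ENNReal.ofReal (ρ (j + 1) ^ β) * m (s j) := by
    refine layercake_aux m _ _ s (fun j => Metric.isOpen_ball.measurableSet) ?_
    intro y'
    by_cases hle : dist y y' ≤ Real.sqrt t
    · rcases eq_or_lt_of_le (dist_nonneg : (0 : ℝ) ≤ dist y y') with h0 | hpos
      · rw [if_pos hle, ← h0, Real.zero_rpow (ne_of_lt hβ)]
        simp
      · have hex : ∃ j, ρ (j + 1) < dist y y' := by
          obtain ⟨n, hn⟩ := exists_pow_lt_of_lt_one (div_pos hpos hst)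
            (by norm_num : (1 / 2 : ℝ) < 1)
          refine ⟨n, ?_⟩
          have h1 : ρ n < dist y y' := by
            rw [hρ]
            calc (1 / 2 : ℝ) ^ n * Real.sqrt t < dist y y' / Real.sqrt t * Real.sqrt t :=
                  mul_lt_mul_of_pos_right hn hst
              _ = dist y y' := by field_simp
          have h2 : ρ (n + 1) ≤ ρ n := by
            rw [hρ]
            exact mul_le_mul_of_nonneg_right
              (pow_le_pow_of_le_one (by norm_num) (by norm_num) (Nat.le_succ n))
              (Real.sqrt_nonneg t)
          exact lt_of_le_of_lt h2 h1
        set j := Nat.find hex with hj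
        have hj1 : ρ (j + 1) < dist y y' := Nat.find_spec hex
        have hmem : y' ∈ s j := by
          rw [hs]
          simp only [Metric.mem_ball]
          rw [dist_comm]
          rcases Nat.eq_zero_or_pos j with hj0 | hjpos
          · rw [hj0]
            have : ρ 0 = Real.sqrt t := by rw [hρ]; simp
            rw [this]
            linarith
          · have hjm : j - 1 < j := Nat.sub_lt hjpos one_pos
            have hmin := Nat.find_min hex hjm
            have hj' : j - 1 + 1 = j := Nat.succ_pred_eq_of_pos hjpos
            rw [hj'] at hmin
            push_neg at hmin
            linarith [hρpos j]
        calc ENNReal.ofReal (if dist y y' ≤ Real.sqrt t then dist y y' ^ β else 0)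
            ≤ (s j).indicator (fun _ => ENNReal.ofReal (ρ (j + 1) ^ β)) y' := by
              rw [Set.indicator_of_mem hmem, if_pos hle]
              exact ENNReal.ofReal_le_ofReal
                (Real.rpow_le_rpow_of_nonpos (hρpos (j + 1)) hj1.le hβ.le)
          _ ≤ ∑' j, (s j).indicator (fun _ => ENNReal.ofReal (ρ (j + 1) ^ β)) y' :=
              ENNReal.le_tsum j
    · rw [if_neg hle]
      simp
  refine key.trans ?_
  set D : ℝ := C_v * 2 ^ d * (1 / 2 : ℝ) ^ β * t ^ α with hD
  have hDpos : 0 < D := by rw [hD]; positivity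
  have hterm : ∀ j : ℕ, ENNReal.ofReal (ρ (j + 1) ^ β) * m (s j)
      ≤ ENNReal.ofReal (D * Q ^ j) := by
    intro j
    have h1 : ρ (j + 1) ^ β = ((1 / 2 : ℝ) ^ β) ^ (j + 1) * t ^ (β / 2) := by
      rw [hρ]
      rw [Real.mul_rpow (by positivity) (Real.sqrt_nonneg t)]
      congr 1
      · rw [← Real.rpow_natCast (1 / 2 : ℝ) (j + 1), ← Real.rpow_mul (by norm_num),
          mul_comm, Real.rpow_mul (by norm_num), Real.rpow_natCast]
      · rw [Real.sqrt_eq_rpow, ← Real.rpow_mul ht.le]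
        congr 1; ring
    have h2 : (2 * ρ j) ^ d = 2 ^ d * (((1 / 2 : ℝ) ^ (d : ℕ)) ^ j * t ^ ((d : ℝ) / 2)) := by
      rw [hρ, mul_pow, mul_pow, ← pow_mul, mul_comm j d, pow_mul]
      have h3 : Real.sqrt t ^ d = t ^ ((d : ℝ) / 2) := by
        rw [Real.sqrt_eq_rpow, ← Real.rpow_natCast (t ^ (1 / 2 : ℝ)) d,
          ← Real.rpow_mul ht.le]
        congr 1; ring
      rw [h3]
    have h3 : t ^ (β / 2) * t ^ ((d : ℝ) / 2) = t ^ α := by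
      rw [← Real.rpow_add ht]
      congr 1
      rw [hβdef]; ring
    calc ENNReal.ofReal (ρ (j + 1) ^ β) * m (s j)
        ≤ ENNReal.ofReal (ρ (j + 1) ^ β) * ENNReal.ofReal (C_v * (2 * ρ j) ^ d) :=
          mul_le_mul_right (hvol y _ (by positivity)) _
      _ = ENNReal.ofReal (ρ (j + 1) ^ β * (C_v * (2 * ρ j) ^ d)) :=
          (ENNReal.ofReal_mul (Real.rpow_nonneg (hρpos (j + 1)).le _)).symm
      _ = ENNReal.ofReal (D * Q ^ j) := by
          congr 1
          rw [h1, h2, hD, hQdef, mul_pow, pow_succ]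
          calc ((1 / 2 : ℝ) ^ β) ^ j * (1 / 2 : ℝ) ^ β * t ^ (β / 2)
                * (C_v * (2 ^ d * (((1 / 2 : ℝ) ^ (d : ℕ)) ^ j * t ^ ((d : ℝ) / 2))))
              = C_v * 2 ^ d * (1 / 2 : ℝ) ^ β * (t ^ (β / 2) * t ^ ((d : ℝ) / 2))
                * (((1 / 2 : ℝ) ^ β) ^ j * ((1 / 2 : ℝ) ^ (d : ℕ)) ^ j) := by ring
            _ = C_v * 2 ^ d * (1 / 2 : ℝ) ^ β * t ^ α
                * (((1 / 2 : ℝ) ^ β) ^ j * ((1 / 2 : ℝ) ^ (d : ℕ)) ^ j) := by rw [h3]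
  calc ∑' (j : ℕ), ENNReal.ofReal (ρ (j + 1) ^ β) * m (s j)
      ≤ ∑' (j : ℕ), ENNReal.ofReal (D * Q ^ j) := ENNReal.tsum_le_tsum hterm
    _ = ENNReal.ofReal (∑' (j : ℕ), D * Q ^ j) :=
        (ENNReal.ofReal_tsum_of_nonneg (fun j => by positivity)
          ((summable_geometric_of_lt_one hQ0 hQ1).mul_left D)).symm
    _ = ENNReal.ofReal (C_v * 2 ^ d * (1 / 2 : ℝ) ^ β * (1 - Q)⁻¹ * t ^ α) := by
        rw [tsum_mul_left, tsum_geometric_of_lt_one hQ0 hQ1, hD]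
        ring_nf
/-- Estimate (3.13) of the paper, metric-measure form: two Gaussian factors with
possibly different centers integrated against the Riesz-type kernel linking the
two integration variables. -/
theorem gaussian_riesz_double_integral_two_factors
    (d : ℕ) (hd : 1 ≤ d) {M : Type*} [MetricSpace M] [MeasurableSpace M] [BorelSpace M]
    (m : Measure M) (hfin : m Set.univ < ⊤)
    (C_v : ℝ) (hCv : 0 < C_v)
    (hvol : ∀ (x : M) (r : ℝ), 0 < r → m (Metric.ball x r) ≤ ENNReal.ofReal (C_v * r ^ d))
    (c : ℝ) (hc : 0 < c) (α : ℝ) (hα : 0 < α) (hαd : α < (d:ℝ) / 2) :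
    ∃ C > 0, ∀ t > 0, ∀ x x' : M,
      ∫⁻ y, ∫⁻ y', ENNReal.ofReal (t ^ (-((d:ℝ) / 2)) *
          Real.exp (-(dist x y ^ 2) / (c * t)) * dist y y' ^ (2 * α - (d:ℝ)) *
          (t ^ (-((d:ℝ) / 2)) * Real.exp (-(dist x' y' ^ 2) / (c * t)))) ∂m ∂m
        ≤ ENNReal.ofReal (C * (t ^ ((2 * α - (d:ℝ)) / 2) + 1)) := by
  obtain ⟨A, hA, hG⟩ := gauss_bound m d C_v hCv hvol c hc
  obtain ⟨B, hB, hR⟩ := riesz_bound m d C_v hCv hvol α hα hαd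
  refine ⟨A * B + A * A, by positivity, ?_⟩
  intro t ht x x'
  set β : ℝ := 2 * α - (d : ℝ) with hβdef
  have hβ : β < 0 := by rw [hβdef]; linarith
  have hτ : (0 : ℝ) < t ^ (-((d : ℝ) / 2)) := Real.rpow_pos_of_pos ht _
  have hst : 0 < Real.sqrt t := Real.sqrt_pos.mpr ht
  have htβ : (0 : ℝ) < t ^ (β / 2) := Real.rpow_pos_of_pos ht _
  have hcancel : t ^ (-((d : ℝ) / 2)) * t ^ ((d : ℝ) / 2) = 1 := by
    rw [← Real.rpow_add ht]; simp
  -- the Gaussian factor integrates to at most `A`, uniformly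
  have hgauss : ∀ z : M,
      ∫⁻ w, ENNReal.ofReal (t ^ (-((d : ℝ) / 2)) * Real.exp (-(dist z w ^ 2) / (c * t))) ∂m
        ≤ ENNReal.ofReal A := by
    intro z
    have : ∀ w : M, ENNReal.ofReal (t ^ (-((d : ℝ) / 2)) * Real.exp (-(dist z w ^ 2) / (c * t)))
        = ENNReal.ofReal (t ^ (-((d : ℝ) / 2)))
          * ENNReal.ofReal (Real.exp (-(dist z w ^ 2) / (c * t))) :=
      fun w => ENNReal.ofReal_mul hτ.le
    simp_rw [this]
    rw [lintegral_const_mul' _ _ ENNReal.ofReal_ne_top]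
    calc ENNReal.ofReal (t ^ (-((d : ℝ) / 2)))
          * ∫⁻ w, ENNReal.ofReal (Real.exp (-(dist z w ^ 2) / (c * t))) ∂m
        ≤ ENNReal.ofReal (t ^ (-((d : ℝ) / 2))) * ENNReal.ofReal (A * t ^ ((d : ℝ) / 2)) :=
          mul_le_mul_right (hG t ht z) _
      _ = ENNReal.ofReal (t ^ (-((d : ℝ) / 2)) * (A * t ^ ((d : ℝ) / 2))) :=
          (ENNReal.ofReal_mul hτ.le).symm
      _ = ENNReal.ofReal A := by
          congr 1
          calc t ^ (-((d : ℝ) / 2)) * (A * t ^ ((d : ℝ) / 2))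
              = A * (t ^ (-((d : ℝ) / 2)) * t ^ ((d : ℝ) / 2)) := by ring
            _ = A := by rw [hcancel, mul_one]
  -- notation for the two Gaussian weights
  set P : M → ℝ := fun y => t ^ (-((d : ℝ) / 2)) * Real.exp (-(dist x y ^ 2) / (c * t)) with hP
  set Qf : M → ℝ := fun y' =>
    t ^ (-((d : ℝ) / 2)) * Real.exp (-(dist x' y' ^ 2) / (c * t)) with hQf
  have hPpos : ∀ y, 0 < P y := fun y => by rw [hP]; positivity
  have hQfpos : ∀ y', 0 < Qf y' := fun y' => by rw [hQf]; positivity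
  have hQfle : ∀ y', Qf y' ≤ t ^ (-((d : ℝ) / 2)) := by
    intro y'
    rw [hQf]
    calc t ^ (-((d : ℝ) / 2)) * Real.exp (-(dist x' y' ^ 2) / (c * t))
        ≤ t ^ (-((d : ℝ) / 2)) * 1 := by
          refine mul_le_mul_of_nonneg_left ?_ hτ.le
          rw [Real.exp_le_one_iff, neg_div]
          exact neg_nonpos.mpr (div_nonneg (sq_nonneg _) (by positivity))
      _ = t ^ (-((d : ℝ) / 2)) := mul_one _
  -- kernel split
  have hkernel : ∀ y y' : M, dist y y' ^ β
      ≤ t ^ (β / 2) + (if dist y y' ≤ Real.sqrt t then dist y y' ^ β else 0) := by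
    intro y y'
    by_cases h : dist y y' ≤ Real.sqrt t
    · rw [if_pos h]
      exact le_add_of_nonneg_left htβ.le
    · rw [if_neg h, add_zero]
      push_neg at h
      have h1 : dist y y' ^ β ≤ Real.sqrt t ^ β :=
        Real.rpow_le_rpow_of_nonpos hst h.le hβ.le
      have h2 : Real.sqrt t ^ β = t ^ (β / 2) := by
        rw [Real.sqrt_eq_rpow, ← Real.rpow_mul ht.le]
        congr 1; ring
      rwa [h2] at h1
  set E1 : ℝ≥0∞ := ENNReal.ofReal (t ^ (β / 2) * A) with hE1
  set E2 : ℝ≥0∞ := ENNReal.ofReal (t ^ (-((d : ℝ) / 2)) * (B * t ^ α)) with hE2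
  -- inner integral bound
  have hinner : ∀ y : M,
      ∫⁻ y', ENNReal.ofReal (P y * dist y y' ^ β * Qf y') ∂m
        ≤ ENNReal.ofReal (P y) * (E1 + E2) := by
    intro y
    have hsplit : ∀ y' : M, ENNReal.ofReal (P y * dist y y' ^ β * Qf y')
        ≤ ENNReal.ofReal (P y * t ^ (β / 2) * Qf y')
          + ENNReal.ofReal (P y * (if dist y y' ≤ Real.sqrt t then dist y y' ^ β else 0)
              * Qf y') := by
      intro y'
      refine le_trans (ENNReal.ofReal_le_ofReal ?_) (ENNReal.ofReal_add_le)
      have := hkernel y y'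
      have h1 : P y * dist y y' ^ β * Qf y'
          ≤ P y * (t ^ (β / 2) + (if dist y y' ≤ Real.sqrt t then dist y y' ^ β else 0))
            * Qf y' := by
        refine mul_le_mul_of_nonneg_right
          (mul_le_mul_of_nonneg_left this (hPpos y).le) (hQfpos y').le
      calc P y * dist y y' ^ β * Qf y' ≤ _ := h1
        _ = P y * t ^ (β / 2) * Qf y'
            + P y * (if dist y y' ≤ Real.sqrt t then dist y y' ^ β else 0) * Qf y' := by ring
    have hmeas : Measurable fun y' : M =>
        ENNReal.ofReal (P y * t ^ (β / 2) * Qf y') := by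
      apply ENNReal.measurable_ofReal.comp
      apply Measurable.const_mul
      rw [hQf]
      fun_prop
    calc ∫⁻ y', ENNReal.ofReal (P y * dist y y' ^ β * Qf y') ∂m
        ≤ ∫⁻ y', (ENNReal.ofReal (P y * t ^ (β / 2) * Qf y')
            + ENNReal.ofReal (P y * (if dist y y' ≤ Real.sqrt t then dist y y' ^ β else 0)
                * Qf y')) ∂m := lintegral_mono hsplit
      _ = (∫⁻ y', ENNReal.ofReal (P y * t ^ (β / 2) * Qf y') ∂m)
          + ∫⁻ y', ENNReal.ofReal (P y * (if dist y y' ≤ Real.sqrt t then dist y y' ^ β else 0)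
              * Qf y') ∂m := lintegral_add_left hmeas _
      _ ≤ ENNReal.ofReal (P y) * E1 + ENNReal.ofReal (P y) * E2 := by
          gcongr
          · -- far part
            have heq : ∀ y' : M, ENNReal.ofReal (P y * t ^ (β / 2) * Qf y')
                = ENNReal.ofReal (P y * t ^ (β / 2)) * ENNReal.ofReal (Qf y') :=
              fun y' => by rw [← ENNReal.ofReal_mul (by positivity)]
            simp_rw [heq]
            rw [lintegral_const_mul' _ _ ENNReal.ofReal_ne_top]
            calc ENNReal.ofReal (P y * t ^ (β / 2)) * ∫⁻ y', ENNReal.ofReal (Qf y') ∂m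
                ≤ ENNReal.ofReal (P y * t ^ (β / 2)) * ENNReal.ofReal A := by
                  refine mul_le_mul_right ?_ _
                  refine le_trans (le_of_eq ?_) (hgauss x')
                  rfl
              _ = ENNReal.ofReal (P y) * E1 := by
                  rw [hE1, ← ENNReal.ofReal_mul (by positivity),
                    ← ENNReal.ofReal_mul (hPpos y).le]
                  congr 1; ring
          · -- near part
            have heq : ∀ y' : M,
                ENNReal.ofReal (P y * (if dist y y' ≤ Real.sqrt t then dist y y' ^ β else 0)
                  * Qf y')
                = ENNReal.ofReal (P y)
                  * ENNReal.ofReal ((if dist y y' ≤ Real.sqrt t then dist y y' ^ β else 0)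
                      * Qf y') := by
              intro y'
              rw [← ENNReal.ofReal_mul (hPpos y).le, mul_assoc]
            simp_rw [heq]
            rw [lintegral_const_mul' _ _ ENNReal.ofReal_ne_top]
            refine mul_le_mul_right ?_ _
            calc ∫⁻ y', ENNReal.ofReal ((if dist y y' ≤ Real.sqrt t then dist y y' ^ β else 0)
                  * Qf y') ∂m
                ≤ ∫⁻ y', ENNReal.ofReal (t ^ (-((d : ℝ) / 2)))
                    * ENNReal.ofReal (if dist y y' ≤ Real.sqrt t then dist y y' ^ β else 0) ∂m := by
                  refine lintegral_mono fun y' => ?_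
                  rw [← ENNReal.ofReal_mul hτ.le]
                  refine ENNReal.ofReal_le_ofReal ?_
                  have hknn : 0 ≤ (if dist y y' ≤ Real.sqrt t then dist y y' ^ β else 0) := by
                    split
                    · exact Real.rpow_nonneg dist_nonneg _
                    · exact le_rfl
                  calc (if dist y y' ≤ Real.sqrt t then dist y y' ^ β else 0) * Qf y'
                      ≤ (if dist y y' ≤ Real.sqrt t then dist y y' ^ β else 0)
                        * t ^ (-((d : ℝ) / 2)) :=
                        mul_le_mul_of_nonneg_left (hQfle y') hknn
                    _ = t ^ (-((d : ℝ) / 2))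
                        * (if dist y y' ≤ Real.sqrt t then dist y y' ^ β else 0) := by ring
              _ = ENNReal.ofReal (t ^ (-((d : ℝ) / 2)))
                  * ∫⁻ y', ENNReal.ofReal
                      (if dist y y' ≤ Real.sqrt t then dist y y' ^ β else 0) ∂m :=
                  lintegral_const_mul' _ _ ENNReal.ofReal_ne_top
              _ ≤ ENNReal.ofReal (t ^ (-((d : ℝ) / 2))) * ENNReal.ofReal (B * t ^ α) :=
                  mul_le_mul_right (hR t ht y) _
              _ = E2 := by rw [hE2, ← ENNReal.ofReal_mul hτ.le]
      _ = ENNReal.ofReal (P y) * (E1 + E2) := (mul_add _ _ _).symm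
  -- outer integral
  show (∫⁻ y, ∫⁻ y', ENNReal.ofReal (P y * dist y y' ^ β * Qf y') ∂m ∂m)
      ≤ ENNReal.ofReal ((A * B + A * A) * (t ^ (β / 2) + 1))
  calc ∫⁻ y, ∫⁻ y', ENNReal.ofReal (P y * dist y y' ^ β * Qf y') ∂m ∂m
      ≤ ∫⁻ y, ENNReal.ofReal (P y) * (E1 + E2) ∂m := lintegral_mono hinner
    _ = (∫⁻ y, ENNReal.ofReal (P y) ∂m) * (E1 + E2) :=
        lintegral_mul_const' _ _ (by
          rw [hE1, hE2]
          exact ENNReal.add_ne_top.mpr ⟨ENNReal.ofReal_ne_top, ENNReal.ofReal_ne_top⟩)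
    _ ≤ ENNReal.ofReal A * (E1 + E2) := mul_le_mul_left (hgauss x) _
    _ ≤ ENNReal.ofReal ((A * B + A * A) * (t ^ (β / 2) + 1)) := by
        rw [hE1, hE2, mul_add, ← ENNReal.ofReal_mul hA.le, ← ENNReal.ofReal_mul hA.le]
        have hx1 : A * (t ^ (β / 2) * A) = (A * A) * t ^ (β / 2) := by ring
        have hx2 : A * (t ^ (-((d : ℝ) / 2)) * (B * t ^ α)) = (A * B) * t ^ (β / 2) := by
          have : t ^ (-((d : ℝ) / 2)) * t ^ α = t ^ (β / 2) := by
            rw [← Real.rpow_add ht]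
            congr 1
            rw [hβdef]; ring
          calc A * (t ^ (-((d : ℝ) / 2)) * (B * t ^ α))
              = (A * B) * (t ^ (-((d : ℝ) / 2)) * t ^ α) := by ring
            _ = (A * B) * t ^ (β / 2) := by rw [this]
        rw [hx1, hx2, ← ENNReal.ofReal_add (by positivity) (by positivity)]
        refine ENNReal.ofReal_le_ofReal ?_
        nlinarith [htβ.le, mul_pos hA hB, mul_pos hA hA]
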